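/- arXiv:1604.03400 — 3 statements merged into one kernel-verified Lean document; each statement's English description precedes it below -/
import Mathlib

section
/- Uniform slope bound under the sufficient condition for global optimization: Let ψ : ℝ → ℝ be continuously differentiable and 1-periodic, let C, σ, γ, c₀ > 0, let ζ be a regularizer, and let N ≥ 1, h = 1/N, δ ≤ c₀·h, ρ > 0. Suppose φ̄ ∈ (0, π/2) satisfies (1/√(2Cσ))·[σ + 4γ·(∫₀¹ √(1 + ψ'(x)²) dx + c₀)] + arctan(sup_{x∈[0,1]} |ψ'(x)| + 2c₀) ≤ φ̄. Then every discrete curve v with E_{h,δ,ρ}[v] ≤ σ for which there exists an index j₁ with ζ_δ(v_{j₁−1} − ψ(x_{j₁−1}))·ζ_δ(v_{j₁} − ψ(x_{j₁})) > 0 satisfies max_j |d_j| ≤ tan φ̄. -/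
open Filter MeasureTheory

noncomputable section

/-- mesh point `x_j = j·h` with `h = 1/N`. -/
def xj (N : ℕ) (j : ℤ) : ℝ := j * ((1 : ℝ) / N)

/-- first difference quotient `d_j = (v_j − v_{j−1})/h`. -/
def dq (N : ℕ) (v : ℤ → ℝ) (j : ℤ) : ℝ := (v j - v (j - 1)) / ((1 : ℝ) / N)

/-- second difference quotient `D_j = (v_{j+1} − 2v_j + v_{j−1})/h²`. -/
def Dq (N : ℕ) (v : ℤ → ℝ) (j : ℤ) : ℝ :=
  (v (j + 1) - 2 * v j + v (j - 1)) / ((1 : ℝ) / N) ^ 2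

/-- half segment length `l_j = (h/2)·√(1 + d_j²)`. -/
def lq (N : ℕ) (v : ℤ → ℝ) (j : ℤ) : ℝ :=
  ((1 : ℝ) / N) / 2 * Real.sqrt (1 + dq N v j ^ 2)

/-- angle `θ_j` between consecutive segments. -/
def θq (N : ℕ) (v : ℤ → ℝ) (j : ℤ) : ℝ :=
  Real.arccos ((1 + dq N v j * dq N v (j + 1)) /
    (Real.sqrt (1 + dq N v j ^ 2) * Real.sqrt (1 + dq N v (j + 1) ^ 2)))

/-- discrete bending energy `B_h`. -/
def Bh (C : ℝ) (N : ℕ) (v : ℤ → ℝ) : ℝ :=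
  C / 2 * ∑ j ∈ Finset.Icc (1 : ℤ) N, θq N v j ^ 2 *
    ((lq N v j ^ 3 + lq N v (j + 1) ^ 3) /
      (lq N v j * lq N v (j + 1) * (lq N v j + lq N v (j + 1)) ^ 2))

/-- discrete tension `T_h`. -/
def Th (σ : ℝ) (N : ℕ) (v : ℤ → ℝ) : ℝ :=
  σ * ∑ j ∈ Finset.Icc (1 : ℤ) N, 2 * lq N v j

/-- a regularizer `ζ`. -/
def IsRegularizer (ζ : ℝ → ℝ) : Prop :=
  ContDiff ℝ 1 ζ ∧ (∀ t, 0 ≤ ζ t ∧ ζ t ≤ 1) ∧ (∀ t, ζ (-t) = ζ t) ∧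
    (∀ t, 1 < t → ζ t = 0) ∧ AntitoneOn ζ (Set.Icc 0 1) ∧ ζ 0 = 1

/-- discrete adhesion energy `A_{h,δ}` (with `ζ_δ(t) = ζ(t/δ)`). -/
def Ah (γ : ℝ) (ζ : ℝ → ℝ) (δ : ℝ) (ψ : ℝ → ℝ) (N : ℕ) (v : ℤ → ℝ) : ℝ :=
  γ * ∑ j ∈ Finset.Icc (1 : ℤ) N,
    ζ ((v (j - 1) - ψ (xj N (j - 1))) / δ) * ζ ((v j - ψ (xj N j)) / δ) * (2 * lq N v j)

/-- discrete penalty `P_{h,ρ}`. -/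
def Ph (ρ : ℝ) (ψ : ℝ → ℝ) (N : ℕ) (v : ℤ → ℝ) : ℝ :=
  1 / ρ * ∑ j ∈ Finset.Icc (1 : ℤ) N, max (ψ (xj N j) - v j) 0 ^ 2 * ((1 : ℝ) / N)

/-- total discrete energy `E_{h,δ,ρ}`. -/
def Eh (C σ γ : ℝ) (ζ ψ : ℝ → ℝ) (N : ℕ) (δ ρ : ℝ) (v : ℤ → ℝ) : ℝ :=
  Bh C N v + Th σ N v - Ah γ ζ δ ψ N v + Ph ρ ψ N v

/-- piecewise-affine interpolant of a discrete curve: on `[x_{j−1}, x_j]` it is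
`v_{j−1} + d_j·(x − x_{j−1})`. -/
def interp (N : ℕ) (v : ℤ → ℝ) (x : ℝ) : ℝ :=
  v (⌈x * N⌉ - 1) + dq N v ⌈x * N⌉ * (x - xj N (⌈x * N⌉ - 1))

/-- slope step function of a discrete curve: equal to `d_j` on `(x_{j−1}, x_j)`. -/
def slopeFn (N : ℕ) (v : ℤ → ℝ) (x : ℝ) : ℝ := dq N v ⌈x * N⌉

section AuxStmt15

lemma sqrt_one_add_sq_pos' (a : ℝ) : 0 < Real.sqrt (1 + a^2) := by
  apply Real.sqrt_pos.2; nlinarith [sq_nonneg a]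

lemma arccos_eq_abs' (a b : ℝ) :
    Real.arccos ((1 + a * b) / (Real.sqrt (1 + a ^ 2) * Real.sqrt (1 + b ^ 2))) =
      |Real.arctan b - Real.arctan a| := by
  have ha := sqrt_one_add_sq_pos' a
  have hb := sqrt_one_add_sq_pos' b
  have h1 : (1 + a * b) / (Real.sqrt (1 + a ^ 2) * Real.sqrt (1 + b ^ 2)) =
      Real.cos (Real.arctan b - Real.arctan a) := by
    rw [Real.cos_sub, Real.cos_arctan, Real.cos_arctan, Real.sin_arctan, Real.sin_arctan]
    field_simp
  rw [h1, ← Real.cos_abs]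
  apply Real.arccos_cos (abs_nonneg _)
  have h2 := Real.arctan_lt_pi_div_two b
  have h3 := Real.arctan_lt_pi_div_two a
  have h4 := Real.neg_pi_div_two_lt_arctan b
  have h5 := Real.neg_pi_div_two_lt_arctan a
  rw [abs_sub_le_iff]
  constructor <;> nlinarith [Real.pi_pos]

lemma telescope_abs' (f : ℤ → ℝ) {a b : ℤ} (hab : a ≤ b) :
    |f b - f a| ≤ ∑ i ∈ Finset.Ico a b, |f (i + 1) - f i| := by
  refine Int.le_induction
    (motive := fun b _ => |f b - f a| ≤ ∑ i ∈ Finset.Ico a b, |f (i + 1) - f i|) ?_ ?_ b hab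
  · simp
  · intro b hb ih
    have hsp : Finset.Ico a (b + 1) = insert b (Finset.Ico a b) := by
      ext x; simp only [Finset.mem_Ico, Finset.mem_insert]; omega
    rw [hsp, Finset.sum_insert (by simp)]
    linarith [abs_sub_le (f (b+1)) (f b) (f a)]

lemma sum_Icc_eq_range' (F : ℤ → ℝ) (N : ℕ) :
    ∑ j ∈ Finset.Icc (1 : ℤ) N, F j = ∑ k ∈ Finset.range N, F ((k : ℤ) + 1) := by
  apply Finset.sum_nbij' (fun i : ℤ => (i - 1).toNat) (fun k : ℕ => (k : ℤ) + 1)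
  · intro a ha; simp only [Finset.mem_Icc] at ha; simp only [Finset.mem_range]; omega
  · intro a ha; simp only [Finset.mem_range] at ha; simp only [Finset.mem_Icc]; omega
  · intro a ha; simp only [Finset.mem_Icc] at ha; omega
  · intro a ha; simp only [Finset.mem_range] at ha; omega
  · intro a ha; simp only [Finset.mem_Icc] at ha
    congr 1; omega

lemma periodic_int' (f : ℤ → ℝ) (N : ℕ) (hf : ∀ j, f (j + N) = f j) (j m : ℤ) :
    f (j + m * N) = f j := by
  induction m using Int.induction_on with
  | zero => simp
  | succ m ih => rw [show j + (m + 1) * N = (j + m * N) + N by ring, hf, ih]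
  | pred m ih =>
      have h := hf (j + (-(m:ℤ) - 1) * N)
      rw [show j + (-(m:ℤ) - 1) * N + N = j + (-(m:ℤ)) * N by ring] at h
      rw [← h]
      exact ih

lemma sum_shift_periodic' (g : ℤ → ℝ) (N : ℕ) (hN : 1 ≤ N) (hg : ∀ j, g (j + N) = g j) :
    ∑ j ∈ Finset.Icc (1 : ℤ) N, g (j + 1) = ∑ j ∈ Finset.Icc (1 : ℤ) N, g j := by
  have h1 : ∑ j ∈ Finset.Icc (1 : ℤ) N, g (j + 1)
      = ∑ j ∈ Finset.Icc (2 : ℤ) ((N : ℤ) + 1), g j := by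
    apply Finset.sum_nbij' (fun i : ℤ => i + 1) (fun i : ℤ => i - 1)
    · intro a ha; simp only [Finset.mem_Icc] at *; omega
    · intro a ha; simp only [Finset.mem_Icc] at *; omega
    · intro a _; omega
    · intro a _; omega
    · intro a _; rfl
  have h2 : Finset.Icc (2 : ℤ) ((N : ℤ) + 1)
      = insert ((N : ℤ) + 1) (Finset.Icc (2 : ℤ) (N : ℤ)) := by
    ext x; simp only [Finset.mem_Icc, Finset.mem_insert]; omega
  have h3 : Finset.Icc (1 : ℤ) (N : ℤ) = insert (1 : ℤ) (Finset.Icc (2 : ℤ) (N : ℤ)) := by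
    ext x; simp only [Finset.mem_Icc, Finset.mem_insert]; omega
  rw [h1, h2, h3, Finset.sum_insert (by simp), Finset.sum_insert (by simp)]
  have hg1 : g ((N : ℤ) + 1) = g 1 := by
    have := hg 1; rw [show (1 : ℤ) + N = (N : ℤ) + 1 by ring] at this; exact this
  rw [hg1]

lemma deriv_periodic' (ψ : ℝ → ℝ) (hψper : ∀ x, ψ (x + 1) = ψ x) (x : ℝ) :
    deriv ψ (x + 1) = deriv ψ x := by
  have h : deriv (fun y => ψ (y + 1)) x = deriv ψ (x + 1) := deriv_comp_add_const ψ 1 x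
  rw [show (fun y => ψ (y + 1)) = ψ from funext hψper] at h
  exact h.symm

lemma sup_bound' (ψ : ℝ → ℝ) (hψ : ContDiff ℝ 1 ψ) (hψper : ∀ x, ψ (x + 1) = ψ x) (x : ℝ) :
    |deriv ψ x| ≤ sSup ((fun x => |deriv ψ x|) '' Set.Icc (0 : ℝ) 1) := by
  have hc : Continuous (fun x => |deriv ψ x|) := (hψ.continuous_deriv le_rfl).abs
  have hper : Function.Periodic (fun x => |deriv ψ x|) 1 := by
    intro t; simp [deriv_periodic' ψ hψper t]
  have hbdd : BddAbove ((fun x => |deriv ψ x|) '' Set.Icc (0 : ℝ) 1) :=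
    (isCompact_Icc.image hc).bddAbove
  have hx : |deriv ψ (x - (⌊x⌋ : ℤ) * 1)| = |deriv ψ x| := hper.sub_int_mul_eq ⌊x⌋
  rw [← hx]
  apply le_csSup hbdd
  refine ⟨x - (⌊x⌋ : ℤ) * 1, ⟨?_, ?_⟩, rfl⟩
  · simp only [mul_one, sub_nonneg]; exact Int.floor_le x
  · simp only [mul_one]; linarith [Int.lt_floor_add_one x]

lemma len_integral_bound' (ψ : ℝ → ℝ) (hψ : ContDiff ℝ 1 ψ) {a b : ℝ} (hab : a ≤ b) :
    Real.sqrt ((b - a) ^ 2 + (ψ b - ψ a) ^ 2) ≤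
      ∫ x in a..b, Real.sqrt (1 + deriv ψ x ^ 2) := by
  have hd : Continuous (deriv ψ) := hψ.continuous_deriv le_rfl
  have hcont : Continuous (fun x => Real.sqrt (1 + deriv ψ x ^ 2)) :=
    (continuous_const.add (hd.pow 2)).sqrt
  set L := Real.sqrt ((b - a) ^ 2 + (ψ b - ψ a) ^ 2) with hL
  rcases eq_or_lt_of_le (Real.sqrt_nonneg ((b - a) ^ 2 + (ψ b - ψ a) ^ 2)) with h0 | h0
  · rw [hL, ← h0]
    apply intervalIntegral.integral_nonneg hab
    intro x _; positivity
  · set c := (b - a) / L with hc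
    set s := (ψ b - ψ a) / L with hs
    have hL2 : L ^ 2 = (b - a) ^ 2 + (ψ b - ψ a) ^ 2 := Real.sq_sqrt (by positivity)
    have hcs : c ^ 2 + s ^ 2 = 1 := by
      rw [hc, hs]; have hLne : L ≠ 0 := ne_of_gt h0; field_simp; linarith [hL2]
    have key : ∀ x, c + s * deriv ψ x ≤ Real.sqrt (1 + deriv ψ x ^ 2) := by
      intro x
      have h1 : (c + s * deriv ψ x) ^ 2 ≤ 1 + deriv ψ x ^ 2 := by
        nlinarith [sq_nonneg (c * deriv ψ x - s)]
      calc c + s * deriv ψ x ≤ |c + s * deriv ψ x| := le_abs_self _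
        _ = Real.sqrt ((c + s * deriv ψ x) ^ 2) := (Real.sqrt_sq_eq_abs _).symm
        _ ≤ _ := Real.sqrt_le_sqrt h1
    have hftc : ∫ x in a..b, deriv ψ x = ψ b - ψ a := by
      apply intervalIntegral.integral_deriv_eq_sub
      · intro x _; exact (hψ.differentiable one_ne_zero).differentiableAt
      · exact hd.intervalIntegrable a b
    have hkey2 : (b - a) * c + s * (ψ b - ψ a) = L := by
      rw [hc, hs]; have hLne : L ≠ 0 := ne_of_gt h0; field_simp; nlinarith [hL2]
    have hint : ∫ x in a..b, (c + s * deriv ψ x) = L := by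
      rw [intervalIntegral.integral_add (intervalIntegrable_const)
        ((hd.intervalIntegrable a b).const_mul s),
        intervalIntegral.integral_const, intervalIntegral.integral_const_mul, hftc,
        smul_eq_mul, hkey2]
    calc L = ∫ x in a..b, (c + s * deriv ψ x) := hint.symm
      _ ≤ _ := by
          apply intervalIntegral.integral_mono_on hab
            (intervalIntegrable_const.add ((hd.intervalIntegrable a b).const_mul s))
            (hcont.intervalIntegrable a b)
          intro x _; exact key x

lemma sqrt_add_sq_le' (x y z : ℝ) :
    Real.sqrt (x ^ 2 + y ^ 2) ≤ Real.sqrt (x ^ 2 + z ^ 2) + |y - z| := by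
  have h1 : |z| ≤ Real.sqrt (x ^ 2 + z ^ 2) := by
    rw [← Real.sqrt_sq_eq_abs]
    exact Real.sqrt_le_sqrt (by nlinarith [sq_nonneg x])
  have h2 : x ^ 2 + y ^ 2 ≤ (Real.sqrt (x ^ 2 + z ^ 2) + |y - z|) ^ 2 := by
    have h3 : Real.sqrt (x ^ 2 + z ^ 2) ^ 2 = x ^ 2 + z ^ 2 := Real.sq_sqrt (by positivity)
    have h4 : |y - z| ^ 2 = (y - z) ^ 2 := sq_abs _
    nlinarith [abs_nonneg (y - z), Real.sqrt_nonneg (x ^ 2 + z ^ 2),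
      abs_mul_abs_self (y - z), abs_le_abs_of_nonneg (le_refl 0) (le_refl (0:ℝ)),
      mul_le_mul_of_nonneg_right h1 (abs_nonneg (y - z)),
      neg_abs_le (y - z), le_abs_self (y - z), neg_abs_le z, le_abs_self z]
  calc Real.sqrt (x ^ 2 + y ^ 2) ≤ Real.sqrt ((Real.sqrt (x ^ 2 + z ^ 2) + |y - z|) ^ 2) :=
        Real.sqrt_le_sqrt h2
    _ = _ := Real.sqrt_sq (by positivity)

lemma cs_step' (s : Finset ℤ) (θ w u : ℤ → ℝ) (hθ : ∀ j ∈ s, 0 ≤ θ j)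
    (hw : ∀ j ∈ s, 0 < w j) (hu : ∀ j ∈ s, 1 / w j ≤ u j) :
    (∑ j ∈ s, θ j) ^ 2 ≤ (∑ j ∈ s, θ j ^ 2 * w j) * (∑ j ∈ s, u j) := by
  have h1 : (∑ j ∈ s, θ j) ^ 2 ≤ (∑ j ∈ s, θ j ^ 2 * w j) * (∑ j ∈ s, 1 / w j) := by
    have := Finset.sum_mul_sq_le_sq_mul_sq s (fun j => θ j * Real.sqrt (w j))
      (fun j => 1 / Real.sqrt (w j))
    have e1 : ∀ j ∈ s, θ j * Real.sqrt (w j) * (1 / Real.sqrt (w j)) = θ j := by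
      intro j hj
      have : Real.sqrt (w j) ≠ 0 := ne_of_gt (Real.sqrt_pos.2 (hw j hj))
      field_simp
    have e2 : ∀ j ∈ s, (θ j * Real.sqrt (w j)) ^ 2 = θ j ^ 2 * w j := by
      intro j hj
      rw [mul_pow, Real.sq_sqrt (le_of_lt (hw j hj))]
    have e3 : ∀ j ∈ s, (1 / Real.sqrt (w j)) ^ 2 = 1 / w j := by
      intro j hj
      rw [div_pow, one_pow, Real.sq_sqrt (le_of_lt (hw j hj))]
    rw [Finset.sum_congr rfl e1, Finset.sum_congr rfl e2, Finset.sum_congr rfl e3] at this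
    exact this
  refine h1.trans (mul_le_mul_of_nonneg_left (Finset.sum_le_sum hu) ?_)
  apply Finset.sum_nonneg
  intro j hj
  exact mul_nonneg (sq_nonneg _) (le_of_lt (hw j hj))

lemma abs_arctan' (x : ℝ) : |Real.arctan x| = Real.arctan |x| := by
  rcases le_total 0 x with hx | hx
  · rw [abs_of_nonneg hx, abs_of_nonneg]
    rw [← Real.arctan_zero]
    exact Real.arctan_strictMono.monotone hx
  · rw [abs_of_nonpos hx, abs_of_nonpos, ← Real.arctan_neg]
    rw [← Real.arctan_zero]
    exact Real.arctan_strictMono.monotone hx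


lemma weight_ineq' (a b : ℝ) (ha : 0 < a) (hb : 0 < b) :
    1 / ((a ^ 3 + b ^ 3) / (a * b * (a + b) ^ 2)) ≤ a + b := by
  rw [one_div_div, div_le_iff₀ (by positivity)]
  nlinarith [sq_nonneg (a - b), mul_pos ha hb, sq_nonneg (a + b),
    mul_pos (mul_pos ha hb) (mul_pos ha hb)]

end AuxStmt15

set_option maxHeartbeats 1000000 in
/-- Uniform slope bound under the sufficient condition for global optimization. -/

theorem stmt15 (ψ : ℝ → ℝ) (hψ : ContDiff ℝ 1 ψ) (hψper : ∀ x, ψ (x + 1) = ψ x)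
    (C σ γ c₀ : ℝ) (hC : 0 < C) (hσ : 0 < σ) (hγ : 0 < γ) (hc₀ : 0 < c₀)
    (ζ : ℝ → ℝ) (hζ : IsRegularizer ζ)
    (N : ℕ) (hN : 1 ≤ N) (δ ρ : ℝ) (hδpos : 0 < δ) (hδ : δ ≤ c₀ * ((1 : ℝ) / N))
    (hρ : 0 < ρ)
    (φbar : ℝ) (hφbar : φbar ∈ Set.Ioo 0 (Real.pi / 2))
    (hcond : 1 / Real.sqrt (2 * C * σ) *
        (σ + 4 * γ * ((∫ x in Set.Ioo (0 : ℝ) 1, Real.sqrt (1 + deriv ψ x ^ 2)) + c₀)) +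
        Real.arctan (sSup ((fun x => |deriv ψ x|) '' Set.Icc (0 : ℝ) 1) + 2 * c₀) ≤ φbar)
    (v : ℤ → ℝ) (hper : ∀ j, v (j + N) = v j)
    (hE : Eh C σ γ ζ ψ N δ ρ v ≤ σ)
    (hadh : ∃ j₁ : ℤ, 0 < ζ ((v (j₁ - 1) - ψ (xj N (j₁ - 1))) / δ) *
      ζ ((v j₁ - ψ (xj N j₁)) / δ)) :
    ∀ j, |dq N v j| ≤ Real.tan φbar := by
  obtain ⟨hζC, hζ01, hζeven, hζzero, hζanti, hζ1⟩ := hζ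
  have hNR : (0:ℝ) < N := by exact_mod_cast hN
  have hNne : (N:ℝ) ≠ 0 := ne_of_gt hNR
  set h : ℝ := (1:ℝ) / N with hh
  have hhpos : 0 < h := by positivity
  -- periodicity of basic quantities
  have hvper : ∀ j : ℤ, v (j + N) = v j := hper
  have hdper : ∀ j : ℤ, dq N v (j + N) = dq N v j := by
    intro j
    simp only [dq]
    rw [hvper j, show j + (N:ℤ) - 1 = (j - 1) + N by ring, hvper (j-1)]
  have hlper : ∀ j : ℤ, lq N v (j + N) = lq N v j := by
    intro j; simp only [lq, hdper j]
  set f : ℤ → ℝ := fun j => Real.arctan (dq N v j) with hf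
  have hfper : ∀ j : ℤ, f (j + N) = f j := by
    intro j; simp only [hf, hdper j]
  have hlpos : ∀ j : ℤ, 0 < lq N v j := by
    intro j
    have := sqrt_one_add_sq_pos' (dq N v j)
    simp only [lq]
    positivity
  have hθabs : ∀ j : ℤ, θq N v j = |f (j + 1) - f j| := by
    intro j; simp only [θq, hf]; exact arccos_eq_abs' _ _
  have hθnn : ∀ j : ℤ, 0 ≤ θq N v j := fun j => Real.arccos_nonneg _
  -- mesh and segment lengths
  have hxj : ∀ j : ℤ, xj N j - xj N (j - 1) = h := by
    intro j; simp only [xj, hh]; push_cast; ring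
  have h2l : ∀ j : ℤ, 2 * lq N v j = Real.sqrt (h ^ 2 + (v j - v (j - 1)) ^ 2) := by
    intro j
    have hdv : h * dq N v j = v j - v (j - 1) := by
      simp only [dq, ← hh]; field_simp
    have h1 : 2 * lq N v j = h * Real.sqrt (1 + dq N v j ^ 2) := by
      simp only [lq, ← hh]; ring
    have h2 : Real.sqrt (h ^ 2 + (v j - v (j - 1)) ^ 2)
        = Real.sqrt (h ^ 2) * Real.sqrt (1 + dq N v j ^ 2) := by
      rw [← Real.sqrt_mul (sq_nonneg h)]
      congr 1
      rw [← hdv]; ring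
    rw [h1, h2, Real.sqrt_sq hhpos.le]
  have h2lge : ∀ j : ℤ, h ≤ 2 * lq N v j := by
    intro j
    have hs1 : (1:ℝ) ≤ Real.sqrt (1 + dq N v j ^ 2) := by
      have := Real.sqrt_le_sqrt (show (1:ℝ) ≤ 1 + dq N v j ^ 2 by
        nlinarith [sq_nonneg (dq N v j)])
      rwa [Real.sqrt_one] at this
    have : h * 1 ≤ h * Real.sqrt (1 + dq N v j ^ 2) :=
      mul_le_mul_of_nonneg_left hs1 hhpos.le
    simp only [lq, ← hh]; nlinarith [this]
  -- total length
  set Λ : ℝ := ∑ j ∈ Finset.Icc (1 : ℤ) N, lq N v j with hΛ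
  have hcard : (Finset.Icc (1 : ℤ) N).card = N := by
    rw [Int.card_Icc]; omega
  have hΛ1 : 1 ≤ 2 * Λ := by
    have h1 : ∑ j ∈ Finset.Icc (1 : ℤ) N, h ≤ ∑ j ∈ Finset.Icc (1 : ℤ) N, 2 * lq N v j :=
      Finset.sum_le_sum (fun j _ => h2lge j)
    rw [Finset.sum_const, hcard, nsmul_eq_mul] at h1
    have h2 : (N:ℝ) * h = 1 := by rw [hh]; field_simp
    have h3 : ∑ j ∈ Finset.Icc (1 : ℤ) N, 2 * lq N v j = 2 * Λ := by
      rw [hΛ, Finset.mul_sum]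
    rw [h2, h3] at h1
    exact h1
  -- regularizer: positivity forces closeness to obstacle
  have hζabs : ∀ t : ℝ, 0 < ζ t → |t| ≤ 1 := by
    intro t ht
    by_contra hcon
    push_neg at hcon
    rcases abs_cases t with ⟨he, _⟩ | ⟨he, _⟩
    · rw [he] at hcon; rw [hζzero t hcon] at ht; exact lt_irrefl 0 ht
    · rw [he] at hcon
      have h0 : ζ (-t) = 0 := hζzero (-t) hcon
      rw [hζeven] at h0
      rw [h0] at ht; exact lt_irrefl 0 ht
  -- the arc-length integral
  have hcont : Continuous (fun x => Real.sqrt (1 + deriv ψ x ^ 2)) :=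
    (continuous_const.add ((hψ.continuous_deriv le_rfl).pow 2)).sqrt
  set I : ℝ := ∫ x in Set.Ioo (0 : ℝ) 1, Real.sqrt (1 + deriv ψ x ^ 2) with hI
  have hxmono : ∀ j : ℤ, xj N (j - 1) ≤ xj N j := by
    intro j; nlinarith [hxj j]
  have hIsum : ∑ j ∈ Finset.Icc (1 : ℤ) N,
      (∫ x in (xj N (j-1))..(xj N j), Real.sqrt (1 + deriv ψ x ^ 2)) = I := by
    rw [sum_Icc_eq_range'
      (fun j => ∫ x in (xj N (j-1))..(xj N j), Real.sqrt (1 + deriv ψ x ^ 2)) N]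
    have he : ∀ k ∈ Finset.range N,
        (∫ x in (xj N ((k:ℤ)+1-1))..(xj N ((k:ℤ)+1)), Real.sqrt (1 + deriv ψ x ^ 2))
        = ∫ x in ((fun m : ℕ => xj N (m:ℤ)) k)..((fun m : ℕ => xj N (m:ℤ)) (k+1)),
            Real.sqrt (1 + deriv ψ x ^ 2) := by
      intro k _
      have e2 : (((k+1:ℕ)):ℤ) = (k:ℤ)+1 := by push_cast; ring
      simp only [show (k:ℤ)+1-1 = (k:ℤ) by ring, e2]
    rw [Finset.sum_congr rfl he,
      intervalIntegral.sum_integral_adjacent_intervals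
        (fun k _ => hcont.intervalIntegrable _ _)]
    have h0 : xj N ((0:ℕ):ℤ) = 0 := by simp [xj]
    have h1 : xj N ((N:ℕ):ℤ) = 1 := by simp [xj]; field_simp
    rw [h0, h1, intervalIntegral.integral_of_le zero_le_one,
      MeasureTheory.integral_Ioc_eq_integral_Ioo]
  have hInn : 0 ≤ I := by
    rw [hI]
    apply MeasureTheory.setIntegral_nonneg measurableSet_Ioo
    intro x _; positivity
  have hdN : δ * N ≤ c₀ := by
    have : δ * N ≤ (c₀ * h) * N := by nlinarith [hNR]
    calc δ * N ≤ (c₀ * h) * N := this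
      _ = c₀ := by rw [hh]; field_simp
  -- adhesion bound
  have hAh : Ah γ ζ δ ψ N v ≤ γ * (I + 2 * c₀) := by
    have hterm : ∀ j ∈ Finset.Icc (1:ℤ) N,
        ζ ((v (j - 1) - ψ (xj N (j - 1))) / δ) * ζ ((v j - ψ (xj N j)) / δ) * (2 * lq N v j)
        ≤ (∫ x in (xj N (j-1))..(xj N j), Real.sqrt (1 + deriv ψ x ^ 2)) + 2 * δ := by
      intro j _
      have hA01 := hζ01 ((v (j - 1) - ψ (xj N (j - 1))) / δ)
      have hB01 := hζ01 ((v j - ψ (xj N j)) / δ)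
      have hint_nn : 0 ≤ ∫ x in (xj N (j-1))..(xj N j), Real.sqrt (1 + deriv ψ x ^ 2) := by
        apply intervalIntegral.integral_nonneg (hxmono j)
        intro x _; positivity
      rcases (mul_nonneg hA01.1 hB01.1).lt_or_eq with h0 | h0
      · -- both positive: segment is near the obstacle
        have hpos : 0 < ζ ((v (j - 1) - ψ (xj N (j - 1))) / δ) ∧
            0 < ζ ((v j - ψ (xj N j)) / δ) := by
          rcases mul_pos_iff.1 h0 with hq | hq
          · exact hq
          · exact absurd hq.1 (not_lt.2 hA01.1)
        have hb1 : |v (j-1) - ψ (xj N (j-1))| ≤ δ := by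
          have := hζabs _ hpos.1
          rwa [abs_div, abs_of_pos hδpos, div_le_one hδpos] at this
        have hb2 : |v j - ψ (xj N j)| ≤ δ := by
          have := hζabs _ hpos.2
          rwa [abs_div, abs_of_pos hδpos, div_le_one hδpos] at this
        have hlen : 2 * lq N v j
            ≤ (∫ x in (xj N (j-1))..(xj N j), Real.sqrt (1 + deriv ψ x ^ 2)) + 2 * δ := by
          rw [h2l j]
          have step1 := sqrt_add_sq_le' h (v j - v (j-1)) (ψ (xj N j) - ψ (xj N (j-1)))
          have step2 : |v j - v (j-1) - (ψ (xj N j) - ψ (xj N (j-1)))| ≤ 2 * δ := by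
            have hw : v j - v (j-1) - (ψ (xj N j) - ψ (xj N (j-1)))
                = (v j - ψ (xj N j)) - (v (j-1) - ψ (xj N (j-1))) := by ring
            rw [hw]
            calc |(v j - ψ (xj N j)) - (v (j-1) - ψ (xj N (j-1)))|
                ≤ |v j - ψ (xj N j)| + |v (j-1) - ψ (xj N (j-1))| := abs_sub _ _
              _ ≤ 2 * δ := by linarith
          have step3 : Real.sqrt (h ^ 2 + (ψ (xj N j) - ψ (xj N (j-1))) ^ 2)
              ≤ ∫ x in (xj N (j-1))..(xj N j), Real.sqrt (1 + deriv ψ x ^ 2) := by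
            have := len_integral_bound' ψ hψ (hxmono j)
            rwa [hxj j] at this
          linarith
        calc ζ ((v (j - 1) - ψ (xj N (j - 1))) / δ) * ζ ((v j - ψ (xj N j)) / δ)
              * (2 * lq N v j)
            ≤ 1 * (2 * lq N v j) := by
              apply mul_le_mul_of_nonneg_right _ (by linarith [hlpos j])
              calc ζ ((v (j - 1) - ψ (xj N (j - 1))) / δ) * ζ ((v j - ψ (xj N j)) / δ)
                  ≤ 1 * 1 := mul_le_mul hA01.2 hB01.2 hB01.1 zero_le_one
                _ = 1 := by ring
          _ = 2 * lq N v j := one_mul _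
          _ ≤ _ := hlen
      · rw [← h0, zero_mul]
        linarith
    unfold Ah
    have hsum := Finset.sum_le_sum hterm
    have hsum2 : ∑ j ∈ Finset.Icc (1:ℤ) N,
        ((∫ x in (xj N (j-1))..(xj N j), Real.sqrt (1 + deriv ψ x ^ 2)) + 2 * δ)
        = I + N * (2 * δ) := by
      rw [Finset.sum_add_distrib, hIsum, Finset.sum_const, hcard, nsmul_eq_mul]
    rw [hsum2] at hsum
    have : γ * (I + N * (2*δ)) ≤ γ * (I + 2 * c₀) := by
      apply mul_le_mul_of_nonneg_left _ hγ.le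
      nlinarith [hdN]
    calc γ * ∑ j ∈ Finset.Icc (1:ℤ) N,
          ζ ((v (j - 1) - ψ (xj N (j - 1))) / δ) * ζ ((v j - ψ (xj N j)) / δ) * (2 * lq N v j)
        ≤ γ * (I + N * (2*δ)) := mul_le_mul_of_nonneg_left hsum hγ.le
      _ ≤ γ * (I + 2 * c₀) := this
  -- energy pieces
  have hPh : 0 ≤ Ph ρ ψ N v := by
    unfold Ph
    apply mul_nonneg (by positivity)
    apply Finset.sum_nonneg
    intro j _
    have : 0 ≤ max (ψ (xj N j) - v j) 0 := le_max_right _ _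
    positivity
  have hwpos : ∀ j : ℤ, 0 < (lq N v j ^ 3 + lq N v (j + 1) ^ 3) /
      (lq N v j * lq N v (j + 1) * (lq N v j + lq N v (j + 1)) ^ 2) := by
    intro j
    have h1 := hlpos j
    have h2 := hlpos (j+1)
    positivity
  have hBnn : 0 ≤ Bh C N v := by
    unfold Bh
    apply mul_nonneg (by positivity)
    apply Finset.sum_nonneg
    intro j _
    exact mul_nonneg (sq_nonneg _) (hwpos j).le
  have hThΛ : Th σ N v = σ * (2 * Λ) := by
    unfold Th
    rw [hΛ]
    congr 1
    rw [Finset.mul_sum]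
  have hXY : Bh C N v + σ * (2 * Λ) ≤ σ + γ * (I + 2 * c₀) := by
    have hE' := hE
    unfold Eh at hE'
    rw [hThΛ] at hE'
    linarith
  -- Cauchy–Schwarz bound on the total turning angle
  set S : ℝ := ∑ j ∈ Finset.Icc (1:ℤ) N, θq N v j with hS
  have hS0 : 0 ≤ S := Finset.sum_nonneg (fun j _ => hθnn j)
  have hCS : C * S ^ 2 ≤ (2 * Bh C N v) * (2 * Λ) := by
    have h1 := cs_step' (Finset.Icc (1:ℤ) N) (θq N v)
      (fun j => (lq N v j ^ 3 + lq N v (j + 1) ^ 3) /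
        (lq N v j * lq N v (j + 1) * (lq N v j + lq N v (j + 1)) ^ 2))
      (fun j => lq N v j + lq N v (j+1))
      (fun j _ => hθnn j) (fun j _ => hwpos j)
      (fun j _ => weight_ineq' (lq N v j) (lq N v (j+1)) (hlpos j) (hlpos (j+1)))
    have e2 : ∑ j ∈ Finset.Icc (1:ℤ) N, (lq N v j + lq N v (j+1)) = 2 * Λ := by
      rw [Finset.sum_add_distrib, sum_shift_periodic' (lq N v) N hN hlper, hΛ]; ring
    rw [e2] at h1
    have h2 := mul_le_mul_of_nonneg_left h1 hC.le
    calc C * S ^ 2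
        ≤ C * ((∑ j ∈ Finset.Icc (1:ℤ) N, θq N v j ^ 2 *
            ((lq N v j ^ 3 + lq N v (j + 1) ^ 3) /
              (lq N v j * lq N v (j + 1) * (lq N v j + lq N v (j + 1)) ^ 2))) * (2 * Λ)) := h2
      _ = (2 * Bh C N v) * (2 * Λ) := by unfold Bh; ring
  -- combine with the energy bound
  have h2Cσpos : (0:ℝ) < 2 * C * σ := by positivity
  have hsqrtpos : 0 < Real.sqrt (2 * C * σ) := Real.sqrt_pos.2 h2Cσpos
  have hsq : Real.sqrt (2 * C * σ) ^ 2 = 2 * C * σ := Real.sq_sqrt h2Cσpos.le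
  have hkey : S * Real.sqrt (2 * C * σ) ≤ Bh C N v + σ * (2 * Λ) := by
    have hXYnn : 0 ≤ Bh C N v + σ * (2 * Λ) := by nlinarith
    have hsq2 : (S * Real.sqrt (2 * C * σ)) ^ 2 ≤ (Bh C N v + σ * (2 * Λ)) ^ 2 := by
      rw [mul_pow, hsq]
      nlinarith [hCS, hBnn, hΛ1, sq_nonneg (Bh C N v - σ * (2 * Λ)),
        mul_le_mul_of_nonneg_right hCS (show (0:ℝ) ≤ 2 * σ by linarith)]
    calc S * Real.sqrt (2 * C * σ)
        = Real.sqrt ((S * Real.sqrt (2 * C * σ)) ^ 2) :=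
          (Real.sqrt_sq (by positivity)).symm
      _ ≤ Real.sqrt ((Bh C N v + σ * (2 * Λ)) ^ 2) := Real.sqrt_le_sqrt hsq2
      _ = Bh C N v + σ * (2 * Λ) := Real.sqrt_sq hXYnn
  have hSbound : S ≤ 1 / Real.sqrt (2 * C * σ) * (σ + 4 * γ * (I + c₀)) := by
    have h3 : σ + γ * (I + 2 * c₀) ≤ σ + 4 * γ * (I + c₀) := by nlinarith
    rw [one_div, inv_mul_eq_div, le_div_iff₀ hsqrtpos]
    linarith
  -- slope bound at the adhered segment
  set M : ℝ := sSup ((fun x => |deriv ψ x|) '' Set.Icc (0 : ℝ) 1) with hM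
  have hMb : ∀ x, |deriv ψ x| ≤ M := sup_bound' ψ hψ hψper
  obtain ⟨j₁, hj₁⟩ := hadh
  have hpos1 : 0 < ζ ((v (j₁ - 1) - ψ (xj N (j₁ - 1))) / δ) ∧
      0 < ζ ((v j₁ - ψ (xj N j₁)) / δ) := by
    rcases mul_pos_iff.1 hj₁ with hq | hq
    · exact hq
    · exact absurd hq.1 (not_lt.2 (hζ01 _).1)
  have hb1 : |v (j₁-1) - ψ (xj N (j₁-1))| ≤ δ := by
    have := hζabs _ hpos1.1
    rwa [abs_div, abs_of_pos hδpos, div_le_one hδpos] at this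
  have hb2 : |v j₁ - ψ (xj N j₁)| ≤ δ := by
    have := hζabs _ hpos1.2
    rwa [abs_div, abs_of_pos hδpos, div_le_one hδpos] at this
  have hψdiff : |ψ (xj N j₁) - ψ (xj N (j₁-1))| ≤ M * h := by
    have hftc : ∫ x in (xj N (j₁-1))..(xj N j₁), deriv ψ x
        = ψ (xj N j₁) - ψ (xj N (j₁-1)) := by
      apply intervalIntegral.integral_deriv_eq_sub
      · intro x _; exact (hψ.differentiable one_ne_zero).differentiableAt
      · exact (hψ.continuous_deriv le_rfl).intervalIntegrable _ _
    rw [← hftc]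
    have hnb := intervalIntegral.norm_integral_le_of_norm_le_const
      (C := M) (f := deriv ψ) (a := xj N (j₁-1)) (b := xj N j₁)
      (fun x _ => hMb x)
    rw [Real.norm_eq_abs] at hnb
    have : |xj N j₁ - xj N (j₁-1)| = h := by rw [hxj j₁]; exact abs_of_pos hhpos
    rwa [this] at hnb
  have hd1 : |dq N v j₁| ≤ M + 2 * c₀ := by
    have hdv : dq N v j₁ = (v j₁ - v (j₁-1)) / h := by simp only [dq, hh]
    have habs : |v j₁ - v (j₁-1)| ≤ (M + 2 * c₀) * h := by
      have h7 : v j₁ - v (j₁-1) = (ψ (xj N j₁) - ψ (xj N (j₁-1)))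
          + ((v j₁ - ψ (xj N j₁)) - (v (j₁-1) - ψ (xj N (j₁-1)))) := by ring
      have h8 : |v j₁ - v (j₁-1)| ≤ |ψ (xj N j₁) - ψ (xj N (j₁-1))|
          + (|v j₁ - ψ (xj N j₁)| + |v (j₁-1) - ψ (xj N (j₁-1))|) := by
        rw [h7]
        refine (abs_add_le _ _).trans (add_le_add le_rfl (abs_sub _ _))
      have hδch : δ ≤ c₀ * h := hδ
      linarith
    rw [hdv, abs_div, abs_of_pos hhpos, div_le_iff₀ hhpos]
    linarith
  have hfj₁ : |f j₁| ≤ Real.arctan (M + 2 * c₀) := by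
    simp only [hf]
    rw [abs_arctan']
    exact Real.arctan_strictMono.monotone hd1
  -- main conclusion
  intro j
  have hNZ : ((N:ℤ)) ≠ 0 := by
    have : N ≠ 0 := by omega
    exact_mod_cast this
  have hNpos' : (0:ℤ) < N := by exact_mod_cast hN
  have hres : ∀ k : ℤ, ∃ r : ℤ, 1 ≤ r ∧ r ≤ (N:ℤ) ∧ f k = f r := by
    intro k
    refine ⟨(k-1) % N + 1, ?_, ?_, ?_⟩
    · have := Int.emod_nonneg (k-1) hNZ; omega
    · have := Int.emod_lt_of_pos (k-1) hNpos'; omega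
    · have hper' := periodic_int' f N hfper ((k-1) % N + 1) ((k-1) / N)
      have he : (k-1) % N + 1 + ((k-1) / N) * N = k := by
        have h9 := Int.mul_ediv_add_emod (k-1) N
        linarith
      conv_lhs => rw [← he]
      exact hper'
  obtain ⟨r, hr1, hr2, hfr⟩ := hres j
  obtain ⟨r₁, hr11, hr12, hfr₁⟩ := hres j₁
  have hsub : ∀ a b : ℤ, 1 ≤ a → b ≤ (N:ℤ) → a ≤ b → |f b - f a| ≤ S := by
    intro a b ha hb hab
    refine (telescope_abs' f hab).trans ?_
    rw [hS]
    have hc : ∀ i ∈ Finset.Ico a b, |f (i+1) - f i| = θq N v i := fun i _ => (hθabs i).symm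
    rw [Finset.sum_congr rfl hc]
    apply Finset.sum_le_sum_of_subset_of_nonneg
    · intro i hi
      simp only [Finset.mem_Ico, Finset.mem_Icc] at *
      omega
    · intro i _ _; exact hθnn i
  have hdiff : |f r - f r₁| ≤ S := by
    rcases le_total r r₁ with hle | hle
    · rw [abs_sub_comm]; exact hsub r r₁ hr1 hr12 hle
    · exact hsub r₁ r hr11 hr2 hle
  have hfj : |f j| ≤ φbar := by
    have t1 : |f j| ≤ |f r - f r₁| + |f r₁| := by
      rw [hfr]
      have := abs_add_le (f r - f r₁) (f r₁)
      simpa using this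
    have t2 : |f r₁| ≤ Real.arctan (M + 2 * c₀) := by rw [← hfr₁]; exact hfj₁
    calc |f j| ≤ |f r - f r₁| + |f r₁| := t1
      _ ≤ S + Real.arctan (M + 2 * c₀) := add_le_add hdiff t2
      _ ≤ 1 / Real.sqrt (2 * C * σ) * (σ + 4 * γ * (I + c₀))
          + Real.arctan (M + 2 * c₀) := by linarith
      _ ≤ φbar := by rw [hI, hM] at *; exact hcond
  have harc : Real.arctan |dq N v j| ≤ φbar := by
    rw [← abs_arctan']
    exact hfj
  have htan : |dq N v j| = Real.tan (Real.arctan |dq N v j|) := (Real.tan_arctan _).symm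
  rw [htan]
  apply Real.strictMonoOn_tan.monotoneOn ?_ ?_ harc
  · exact ⟨Real.neg_pi_div_two_lt_arctan _, Real.arctan_lt_pi_div_two _⟩
  · constructor
    · have := Real.pi_pos
      have := hφbar.1
      simp only [Set.mem_Ioo] at hφbar
      linarith [hφbar.1]
    · exact hφbar.2


end
end

section
/- Uniform bound on the discrete adhesion energy: Let ψ : ℝ → ℝ be continuously differentiable and 1-periodic, let γ, c₀ > 0, let ζ be a regularizer, let N ≥ 1, h = 1/N, and let δ > 0 satisfy δ ≤ c₀·h. Then for every discrete curve v, A_{h,δ}[v] ≤ 4γ·(∫₀¹ √(1 + ψ'(x)²) dx + c₀). -/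
open Filter MeasureTheory

noncomputable section

/-- Uniform bound on the discrete adhesion energy. -/
theorem stmt18 (ψ : ℝ → ℝ) (hψ : ContDiff ℝ 1 ψ) (hψper : ∀ x, ψ (x + 1) = ψ x)
    (γ c₀ : ℝ) (hγ : 0 < γ) (hc₀ : 0 < c₀)
    (ζ : ℝ → ℝ) (hζ : IsRegularizer ζ)
    (N : ℕ) (hN : 1 ≤ N) (δ : ℝ) (hδpos : 0 < δ) (hδ : δ ≤ c₀ * ((1 : ℝ) / N))
    (v : ℤ → ℝ) (hper : ∀ j, v (j + N) = v j) :
    Ah γ ζ δ ψ N v ≤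
      4 * γ * ((∫ x in Set.Ioo (0 : ℝ) 1, Real.sqrt (1 + deriv ψ x ^ 2)) + c₀) := by
  obtain ⟨hζc, hζ01, hζeven, hζ0, hζanti, hζone⟩ := hζ
  have hNpos : (0:ℝ) < N := by exact_mod_cast Nat.pos_of_ne_zero (by omega)
  set h : ℝ := (1:ℝ)/N with hh
  have hhpos : 0 < h := by positivity
  set f : ℝ → ℝ := fun x => Real.sqrt (1 + deriv ψ x ^ 2) with hf
  have hdc : Continuous (deriv ψ) := hψ.continuous_deriv le_rfl
  have hfc : Continuous f := by
    apply Real.continuous_sqrt.comp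
    exact continuous_const.add (hdc.pow 2)
  have hζzero : ∀ t : ℝ, 1 < |t| → ζ t = 0 := by
    intro t ht
    rcases le_or_gt 0 t with h0 | h0
    · exact hζ0 t (by rwa [abs_of_nonneg h0] at ht)
    · rw [← hζeven t]
      exact hζ0 (-t) (by rw [abs_of_neg h0] at ht; linarith)
  -- per-term bound
  have key : ∀ j : ℤ,
      ζ ((v (j - 1) - ψ (xj N (j - 1))) / δ) * ζ ((v j - ψ (xj N j)) / δ) * (2 * lq N v j)
      ≤ h + 2*δ + ∫ x in xj N (j-1)..xj N j, f x := by
    intro j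
    have hxdiff : xj N j - xj N (j-1) = h := by
      simp only [xj, hh]; push_cast; ring
    have hxle : xj N (j-1) ≤ xj N j := by linarith
    have hInn : 0 ≤ ∫ x in xj N (j-1)..xj N j, f x :=
      intervalIntegral.integral_nonneg hxle (fun x _ => Real.sqrt_nonneg _)
    have hlq0 : 0 ≤ 2 * lq N v j := by
      unfold lq; positivity
    by_cases h1 : |v (j-1) - ψ (xj N (j-1))| ≤ δ
    swap
    · rw [hζzero _ (by
        rw [abs_div, abs_of_pos hδpos]
        exact (one_lt_div hδpos).2 (lt_of_not_ge h1))]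
      rw [zero_mul, zero_mul]
      linarith
    by_cases h2 : |v j - ψ (xj N j)| ≤ δ
    swap
    · rw [hζzero ((v j - ψ (xj N j)) / δ) (by
        rw [abs_div, abs_of_pos hδpos]
        exact (one_lt_div hδpos).2 (lt_of_not_ge h2)), mul_zero, zero_mul]
      linarith
    -- main case
    have hprod : ζ ((v (j - 1) - ψ (xj N (j - 1))) / δ) * ζ ((v j - ψ (xj N j)) / δ) ≤ 1 :=
      mul_le_one₀ (hζ01 _).2 (hζ01 _).1 (hζ01 _).2
    have hprod0 : 0 ≤ ζ ((v (j - 1) - ψ (xj N (j - 1))) / δ) * ζ ((v j - ψ (xj N j)) / δ) :=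
      mul_nonneg (hζ01 _).1 (hζ01 _).1
    have step1 : ζ ((v (j - 1) - ψ (xj N (j - 1))) / δ) * ζ ((v j - ψ (xj N j)) / δ) * (2 * lq N v j)
        ≤ 2 * lq N v j := by nlinarith
    have hsq : Real.sqrt (1 + dq N v j ^ 2) ≤ 1 + |dq N v j| := by
      have h1' : (1 + dq N v j ^ 2) ≤ (1 + |dq N v j|)^2 := by
        nlinarith [abs_nonneg (dq N v j), sq_abs (dq N v j)]
      calc Real.sqrt (1 + dq N v j ^ 2) ≤ Real.sqrt ((1 + |dq N v j|)^2) :=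
            Real.sqrt_le_sqrt h1'
        _ = 1 + |dq N v j| := Real.sqrt_sq (by positivity)
    have hhd : h * |dq N v j| = |v j - v (j-1)| := by
      unfold dq
      rw [abs_div, abs_of_pos hhpos, mul_div_cancel₀ _ (ne_of_gt hhpos)]
    have hFTC : ∫ x in xj N (j-1)..xj N j, deriv ψ x = ψ (xj N j) - ψ (xj N (j-1)) :=
      intervalIntegral.integral_deriv_eq_sub
        (fun x _ => (hψ.differentiable one_ne_zero).differentiableAt)
        ((hdc.intervalIntegrable _ _))
    have hψb : |ψ (xj N j) - ψ (xj N (j-1))| ≤ ∫ x in xj N (j-1)..xj N j, f x := by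
      rw [← hFTC]
      calc |∫ x in xj N (j-1)..xj N j, deriv ψ x|
          ≤ ∫ x in xj N (j-1)..xj N j, |deriv ψ x| :=
            intervalIntegral.abs_integral_le_integral_abs hxle
        _ ≤ ∫ x in xj N (j-1)..xj N j, f x := by
            apply intervalIntegral.integral_mono_on hxle
              ((hdc.abs).intervalIntegrable _ _) (hfc.intervalIntegrable _ _)
            intro x _
            rw [hf]
            calc |deriv ψ x| = Real.sqrt ((deriv ψ x)^2) := (Real.sqrt_sq_eq_abs _).symm
              _ ≤ Real.sqrt (1 + deriv ψ x ^ 2) := Real.sqrt_le_sqrt (by linarith)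
    have tri : |v j - v (j-1)| ≤ |v j - ψ (xj N j)| + |ψ (xj N j) - ψ (xj N (j-1))|
        + |v (j-1) - ψ (xj N (j-1))| := by
      have := abs_add_le (v j - ψ (xj N j)) (ψ (xj N j) - ψ (xj N (j-1)))
      have h2' := abs_add_le (v j - ψ (xj N j) + (ψ (xj N j) - ψ (xj N (j-1))))
        (ψ (xj N (j-1)) - v (j-1))
      rw [abs_sub_comm (ψ (xj N (j-1))) (v (j-1))] at h2'
      calc |v j - v (j-1)| = |v j - ψ (xj N j) + (ψ (xj N j) - ψ (xj N (j-1)))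
            + (ψ (xj N (j-1)) - v (j-1))| := by ring_nf
        _ ≤ _ := by linarith
    have hlen : 2 * lq N v j ≤ h + 2*δ + ∫ x in xj N (j-1)..xj N j, f x := by
      have : 2 * lq N v j = h * Real.sqrt (1 + dq N v j ^ 2) := by
        unfold lq; ring
      rw [this]
      have : h * Real.sqrt (1 + dq N v j ^ 2) ≤ h * (1 + |dq N v j|) :=
        mul_le_mul_of_nonneg_left hsq hhpos.le
      rw [mul_add, mul_one, hhd] at this
      linarith
    linarith
  -- sum bound
  have hsum : Ah γ ζ δ ψ N v ≤
      γ * ∑ j ∈ Finset.Icc (1:ℤ) (N:ℤ), (h + 2*δ + ∫ x in xj N (j-1)..xj N j, f x) := by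
    unfold Ah
    exact mul_le_mul_of_nonneg_left (Finset.sum_le_sum (fun j _ => key j)) hγ.le
  have hcard : (Finset.Icc (1:ℤ) (N:ℤ)).card = N := by
    rw [Int.card_Icc]; simp
  have himg : Finset.Icc (1:ℤ) (N:ℤ) = Finset.image (fun i : ℕ => (i:ℤ)+1) (Finset.range N) := by
    ext j
    simp only [Finset.mem_Icc, Finset.mem_image, Finset.mem_range]
    constructor
    · intro hj
      exact ⟨(j-1).toNat, by omega, by omega⟩
    · rintro ⟨i, hi, rfl⟩
      omega
  have hIsum : ∑ j ∈ Finset.Icc (1:ℤ) (N:ℤ), (∫ x in xj N (j-1)..xj N j, f x)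
      = ∫ x in Set.Ioo (0:ℝ) 1, f x := by
    rw [himg, Finset.sum_image (by intro a _ b _ hab; beta_reduce at hab; omega)]
    have hre : ∑ i ∈ Finset.range N, (∫ x in xj N (((i:ℤ)+1)-1)..xj N ((i:ℤ)+1), f x)
        = ∑ i ∈ Finset.range N, ∫ x in (fun k : ℕ => xj N k) i..(fun k : ℕ => xj N k) (i+1), f x := by
      apply Finset.sum_congr rfl
      intro i _
      congr 1 <;> push_cast <;> ring_nf
    rw [hre, intervalIntegral.sum_integral_adjacent_intervals
      (fun i _ => hfc.intervalIntegrable _ _)]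
    have e0 : xj N ((0:ℕ):ℤ) = 0 := by simp [xj]
    have e1 : xj N ((N:ℕ):ℤ) = 1 := by
      simp only [xj]
      field_simp
      norm_cast
    rw [e0, e1, intervalIntegral.integral_of_le (by norm_num),
      MeasureTheory.integral_Ioc_eq_integral_Ioo]
  have hsplit : ∑ j ∈ Finset.Icc (1:ℤ) (N:ℤ), (h + 2*δ + ∫ x in xj N (j-1)..xj N j, f x)
      = (N:ℝ) * (h + 2*δ) + ∫ x in Set.Ioo (0:ℝ) 1, f x := by
    rw [Finset.sum_add_distrib, Finset.sum_const, hcard, hIsum, nsmul_eq_mul]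
  have hf1 : ∀ x, 1 ≤ f x := by
    intro x
    have := Real.sqrt_le_sqrt (show (1:ℝ) ≤ 1 + deriv ψ x ^ 2 by nlinarith [sq_nonneg (deriv ψ x)])
    simpa [hf] using this
  set J := ∫ x in Set.Ioo (0:ℝ) 1, f x with hJ
  have hJ1 : 1 ≤ J := by
    have hint : IntegrableOn f (Set.Ioo (0:ℝ) 1) :=
      (hfc.integrableOn_Icc).mono_set Set.Ioo_subset_Icc_self
    have hvol : (∫ x in Set.Ioo (0:ℝ) 1, (1:ℝ)) = 1 := by simp
    calc (1:ℝ) = ∫ x in Set.Ioo (0:ℝ) 1, (1:ℝ) := hvol.symm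
      _ ≤ J := setIntegral_mono_on (integrableOn_const (by simp)) hint
          measurableSet_Ioo (fun x _ => hf1 x)
  have hNh : (N:ℝ) * h = 1 := by
    rw [hh]; field_simp
  have hNδ : (N:ℝ) * δ ≤ c₀ := by
    have h2 := mul_le_mul_of_nonneg_left hδ hNpos.le
    calc (N:ℝ)*δ ≤ (N:ℝ) * (c₀ * h) := h2
      _ = c₀ * ((N:ℝ)*h) := by ring
      _ = c₀ := by rw [hNh, mul_one]
  have hexp : (N:ℝ) * (h + 2*δ) = 1 + 2*((N:ℝ)*δ) := by
    rw [mul_add, hNh]; ring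
  calc Ah γ ζ δ ψ N v ≤ γ * ((N:ℝ) * (h + 2*δ) + J) := by rw [← hsplit]; exact hsum
    _ = γ * (1 + 2*((N:ℝ)*δ) + J) := by rw [hexp]
    _ ≤ γ * (1 + 2*c₀ + J) := by
        have h3 : (1:ℝ) + 2*((N:ℝ)*δ) + J ≤ 1 + 2*c₀ + J := by linarith
        exact mul_le_mul_of_nonneg_left h3 hγ.le
    _ ≤ 4 * γ * (J + c₀) := by
        nlinarith [mul_nonneg hγ.le (show (0:ℝ) ≤ J - 1 by linarith),
          mul_nonneg hγ.le hc₀.le, hγ.le]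


end
end

section
/- Lᵖ error of the midpoint-interpolated slope function: Let p ∈ [1,∞), let N ≥ 1 be an integer, h = 1/N, and let v = (v_j) be a discrete curve with slopes d_j and second differences D_j. Let g : (0,1) → ℝ be the step function equal to d_j on (x_{j−1}, x_j), and let I_h g be the 1-periodic continuous function that is affine on each interval (x_{j−1/2}, x_{j+1/2}) (where x_{j−1/2} = (j − 1/2)·h) and satisfies I_h g(x_{j−1/2}) = d_j for all j. Then (∫₀¹ |g(x) − I_h g(x)|^p dx)^{1/p} ≤ (1 + p)^{−1/p} · h · (Σ_{j=1}^N |D_j|^p · h)^{1/p}. -/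
open Filter MeasureTheory

noncomputable section

/-- midpoint-interpolated slope function `I_h g`: the 1-periodic continuous function
that is affine on each interval `(x_{j−1/2}, x_{j+1/2})` (with
`x_{j−1/2} = (j−1/2)·h`) and satisfies `I_h g (x_{j−1/2}) = d_j`. -/
def midInterp (N : ℕ) (v : ℤ → ℝ) (x : ℝ) : ℝ :=
  dq N v ⌊x * N + 1 / 2⌋ +
    (x - ((⌊x * N + 1 / 2⌋ : ℝ) - 1 / 2) * ((1 : ℝ) / N)) *
      ((dq N v (⌊x * N + 1 / 2⌋ + 1) - dq N v ⌊x * N + 1 / 2⌋) / ((1 : ℝ) / N))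

/-! ### Auxiliary lemmas -/

lemma absPowInt' (p : ℝ) (hp : 0 < p) (s : ℝ) (hs : 0 ≤ s) :
    ∫ t in (0:ℝ)..s, |t| ^ p = s ^ (p+1) / (p+1) := by
  rw [intervalIntegral.integral_congr (g := fun t => t ^ p) ?_,
    integral_rpow (Or.inl (by linarith))]
  · rw [Real.zero_rpow (by linarith), sub_zero]
  · intro t ht
    rw [Set.uIcc_of_le hs] at ht
    simp only
    rw [abs_of_nonneg ht.1]

lemma val_left' (p : ℝ) (hp : 0 < p) (a m K : ℝ) (ham : a ≤ m) :
    ∫ x in a..m, |m - x| ^ p * K = (m - a)^(p+1)/(p+1) * K := by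
  rw [intervalIntegral.integral_mul_const]
  have h := intervalIntegral.integral_comp_sub_left (a := a) (b := m) (fun t => |t| ^ p) m
  simp only [sub_self] at h
  rw [h, absPowInt' p hp (m - a) (by linarith)]

lemma val_right' (p : ℝ) (hp : 0 < p) (m b K : ℝ) (hmb : m ≤ b) :
    ∫ x in m..b, |x - m| ^ p * K = (b - m)^(p+1)/(p+1) * K := by
  rw [intervalIntegral.integral_mul_const]
  have h := intervalIntegral.integral_comp_sub_right (a := m) (b := b) (f := fun t => |t| ^ p) m
  simp only [sub_self] at h
  rw [h, absPowInt' p hp (b - m) (by linarith)]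

lemma key_lemma' (f g : ℝ → ℝ) (a b : ℝ) (hab : a ≤ b) (hg : Continuous g)
    (heq : Set.EqOn f g (Set.Ioo a b)) :
    IntervalIntegrable f volume a b ∧ ∫ x in a..b, f x = ∫ x in a..b, g x := by
  have hgIoo : IntegrableOn g (Set.Ioo a b) :=
    (hg.integrableOn_Ioc).mono_set Set.Ioo_subset_Ioc_self
  have hfIoo : IntegrableOn f (Set.Ioo a b) :=
    hgIoo.congr_fun (fun x hx => (heq hx).symm) measurableSet_Ioo
  constructor
  · exact (intervalIntegrable_iff_integrableOn_Ioo_of_le hab).mpr hfIoo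
  · rw [intervalIntegral.integral_of_le hab, intervalIntegral.integral_of_le hab,
      integral_Ioc_eq_integral_Ioo, integral_Ioc_eq_integral_Ioo]
    exact setIntegral_congr_fun measurableSet_Ioo heq

lemma mull' {n a x : ℝ} (hn : 0 < n) (h : a * (1/n) < x) : a < x * n := by
  rw [mul_one_div, div_lt_iff₀ hn] at h; exact h

lemma mulr' {n a x : ℝ} (hn : 0 < n) (h : x < a * (1/n)) : x * n < a := by
  rw [mul_one_div, lt_div_iff₀ hn] at h; exact h

lemma ceil_eq' (N : ℕ) (hN : 1 ≤ N) (j : ℤ) (x : ℝ)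
    (hx : x ∈ Set.Ioo (((j:ℝ)-1)*((1:ℝ)/N)) ((j:ℝ)*((1:ℝ)/N))) : ⌈x * N⌉ = j := by
  have hn : (0:ℝ) < N := by exact_mod_cast Nat.pos_of_ne_zero (by omega)
  have h1 := hx.1; have h2 := hx.2
  rw [Int.ceil_eq_iff]
  refine ⟨?_, ?_⟩
  · push_cast
    linarith [mull' hn h1]
  · push_cast
    linarith [mulr' hn h2]

lemma floor_left' (N : ℕ) (hN : 1 ≤ N) (j : ℤ) (x : ℝ)
    (hx : x ∈ Set.Ioo (((j:ℝ)-1)*((1:ℝ)/N)) (((j:ℝ)-1/2)*((1:ℝ)/N))) :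
    ⌊x * N + 1/2⌋ = j - 1 := by
  have hn : (0:ℝ) < N := by exact_mod_cast Nat.pos_of_ne_zero (by omega)
  have h1 := hx.1; have h2 := hx.2
  rw [Int.floor_eq_iff]
  refine ⟨?_, ?_⟩
  · push_cast
    linarith [mull' hn h1]
  · push_cast
    linarith [mulr' hn h2]

lemma floor_right' (N : ℕ) (hN : 1 ≤ N) (j : ℤ) (x : ℝ)
    (hx : x ∈ Set.Ioo (((j:ℝ)-1/2)*((1:ℝ)/N)) ((j:ℝ)*((1:ℝ)/N))) :
    ⌊x * N + 1/2⌋ = j := by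
  have hn : (0:ℝ) < N := by exact_mod_cast Nat.pos_of_ne_zero (by omega)
  have h1 := hx.1; have h2 := hx.2
  rw [Int.floor_eq_iff]
  refine ⟨?_, ?_⟩
  · push_cast
    linarith [mull' hn h1]
  · push_cast
    linarith [mulr' hn h2]

lemma pt1' (N : ℕ) (hN : 1 ≤ N) (v : ℤ → ℝ) (j : ℤ) (x : ℝ)
    (hx : x ∈ Set.Ioo (((j:ℝ)-1)*((1:ℝ)/N)) (((j:ℝ)-1/2)*((1:ℝ)/N))) :
    slopeFn N v x - midInterp N v x = (((j:ℝ)-1/2)*((1:ℝ)/N) - x) * Dq N v (j-1) := by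
  have hn : (0:ℝ) < N := by exact_mod_cast Nat.pos_of_ne_zero (by omega)
  have hne : (N:ℝ) ≠ 0 := hn.ne'
  have hsub : x ∈ Set.Ioo (((j:ℝ)-1)*((1:ℝ)/N)) ((j:ℝ)*((1:ℝ)/N)) := by
    refine ⟨hx.1, lt_of_lt_of_le hx.2 ?_⟩
    apply mul_le_mul_of_nonneg_right (by linarith) (by positivity)
  have hc := ceil_eq' N hN j x hsub
  have hf := floor_left' N hN j x hx
  unfold slopeFn midInterp Dq dq
  rw [hc, hf]
  have e1 : j - 1 + 1 = j := by ring
  rw [e1]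
  have e2 : j - 1 - 1 = j - 2 := by ring
  rw [e2]
  push_cast
  field_simp
  ring

lemma pt2' (N : ℕ) (hN : 1 ≤ N) (v : ℤ → ℝ) (j : ℤ) (x : ℝ)
    (hx : x ∈ Set.Ioo (((j:ℝ)-1/2)*((1:ℝ)/N)) ((j:ℝ)*((1:ℝ)/N))) :
    slopeFn N v x - midInterp N v x = -((x - ((j:ℝ)-1/2)*((1:ℝ)/N)) * Dq N v j) := by
  have hn : (0:ℝ) < N := by exact_mod_cast Nat.pos_of_ne_zero (by omega)
  have hne : (N:ℝ) ≠ 0 := hn.ne'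
  have hsub : x ∈ Set.Ioo (((j:ℝ)-1)*((1:ℝ)/N)) ((j:ℝ)*((1:ℝ)/N)) := by
    refine ⟨lt_of_le_of_lt ?_ hx.1, hx.2⟩
    apply mul_le_mul_of_nonneg_right (by linarith) (by positivity)
  have hc := ceil_eq' N hN j x hsub
  have hf := floor_right' N hN j x hx
  unfold slopeFn midInterp Dq dq
  rw [hc, hf]
  push_cast
  field_simp
  ring_nf

lemma interval_eval' (p : ℝ) (hp : 0 < p) (N : ℕ) (hN : 1 ≤ N) (v : ℤ → ℝ) (j : ℤ) :
    IntervalIntegrable (fun x => |slopeFn N v x - midInterp N v x| ^ p) volume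
      (((j:ℝ)-1)*((1:ℝ)/N)) ((j:ℝ)*((1:ℝ)/N)) ∧
    ∫ x in (((j:ℝ)-1)*((1:ℝ)/N))..((j:ℝ)*((1:ℝ)/N)),
        |slopeFn N v x - midInterp N v x| ^ p =
      (|Dq N v (j-1)| ^ p + |Dq N v j| ^ p) * ((((1:ℝ)/N)/2)^(p+1)/(p+1)) := by
  have hn : (0:ℝ) < N := by exact_mod_cast Nat.pos_of_ne_zero (by omega)
  set hh : ℝ := (1:ℝ)/N with hhdef
  have hhpos : 0 < hh := by positivity
  set a : ℝ := ((j:ℝ)-1)*hh with hadef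
  set m : ℝ := ((j:ℝ)-1/2)*hh with hmdef
  set b : ℝ := (j:ℝ)*hh with hbdef
  have ham : a ≤ m := mul_le_mul_of_nonneg_right (by linarith) hhpos.le
  have hmb : m ≤ b := mul_le_mul_of_nonneg_right (by linarith) hhpos.le
  set f : ℝ → ℝ := fun x => |slopeFn N v x - midInterp N v x| ^ p with hfdef
  have eq1 : Set.EqOn f (fun x => |m - x| ^ p * |Dq N v (j-1)| ^ p) (Set.Ioo a m) := by
    intro x hx
    simp only [hfdef]
    rw [pt1' N hN v j x hx, abs_mul, Real.mul_rpow (abs_nonneg _) (abs_nonneg _)]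
  have eq2 : Set.EqOn f (fun x => |x - m| ^ p * |Dq N v j| ^ p) (Set.Ioo m b) := by
    intro x hx
    simp only [hfdef]
    rw [pt2' N hN v j x hx, abs_neg, abs_mul, Real.mul_rpow (abs_nonneg _) (abs_nonneg _)]
  have cont1 : Continuous fun x : ℝ => |m - x| ^ p * |Dq N v (j-1)| ^ p :=
    (((continuous_const.sub continuous_id).abs.rpow_const
      fun x => Or.inr hp.le).mul continuous_const)
  have cont2 : Continuous fun x : ℝ => |x - m| ^ p * |Dq N v j| ^ p :=
    (((continuous_id.sub continuous_const).abs.rpow_const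
      fun x => Or.inr hp.le).mul continuous_const)
  obtain ⟨i1, e1⟩ := key_lemma' f _ a m ham cont1 eq1
  obtain ⟨i2, e2⟩ := key_lemma' f _ m b hmb cont2 eq2
  refine ⟨i1.trans i2, ?_⟩
  rw [← intervalIntegral.integral_add_adjacent_intervals i1 i2, e1, e2,
      val_left' p hp a m _ ham, val_right' p hp m b _ hmb]
  have hma : m - a = hh/2 := by rw [hmdef, hadef]; ring
  have hbm : b - m = hh/2 := by rw [hmdef, hbdef]; ring
  rw [hma, hbm]
  ring

lemma Dq_per' (N : ℕ) (v : ℤ → ℝ) (hper : ∀ j, v (j + N) = v j) (j : ℤ) :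
    Dq N v (j + N) = Dq N v j := by
  unfold Dq
  have h1 : j + (N:ℤ) + 1 = (j+1) + N := by ring
  have h2 : j + (N:ℤ) - 1 = (j-1) + N := by ring
  rw [h1, h2, hper, hper, hper]

lemma sum_shift' (N : ℕ) (g : ℤ → ℝ) :
    ∑ k ∈ Finset.range N, g ((k:ℤ)+1) = ∑ j ∈ Finset.Icc (1:ℤ) (N:ℤ), g j := by
  induction N with
  | zero => simp
  | succ n ih =>
    have hins : Finset.Icc (1:ℤ) ((n:ℤ)+1) = insert ((n:ℤ)+1) (Finset.Icc (1:ℤ) (n:ℤ)) := by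
      ext z
      simp only [Finset.mem_Icc, Finset.mem_insert]
      omega
    have hnot : ((n:ℤ)+1) ∉ Finset.Icc (1:ℤ) (n:ℤ) := by
      simp only [Finset.mem_Icc]
      omega
    push_cast
    rw [Finset.sum_range_succ, hins, Finset.sum_insert hnot, ih]
    ring

lemma sum_rot' (N : ℕ) (hN : 1 ≤ N) (g : ℕ → ℝ) (hg : g 0 = g N) :
    ∑ k ∈ Finset.range N, g k = ∑ k ∈ Finset.range N, g (k+1) := by
  obtain ⟨M, rfl⟩ : ∃ M, N = M + 1 := ⟨N-1, by omega⟩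
  rw [Finset.sum_range_succ', Finset.sum_range_succ, hg]

/-- Lᵖ error of the midpoint-interpolated slope function. -/
theorem stmt19 (p : ℝ) (hp : 1 ≤ p) (N : ℕ) (hN : 1 ≤ N)
    (v : ℤ → ℝ) (hper : ∀ j, v (j + N) = v j) :
    (∫ x in Set.Ioo (0 : ℝ) 1, |slopeFn N v x - midInterp N v x| ^ p) ^ (1 / p) ≤
      (1 + p) ^ (-(1 / p)) * ((1 : ℝ) / N) *
        (∑ j ∈ Finset.Icc (1 : ℤ) (N : ℤ), |Dq N v j| ^ p * ((1 : ℝ) / N)) ^ (1 / p) := by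
  have hp0 : (0:ℝ) < p := lt_of_lt_of_le one_pos hp
  have hn : (0:ℝ) < N := by exact_mod_cast Nat.pos_of_ne_zero (by omega)
  set hh : ℝ := (1:ℝ)/N with hhdef
  have hhpos : 0 < hh := by positivity
  set c : ℝ := (hh/2)^(p+1)/(p+1) with hcdef
  have hcpos : 0 < c := by
    apply div_pos (Real.rpow_pos_of_pos (by positivity) _) (by linarith)
  set S : ℝ := ∑ j ∈ Finset.Icc (1:ℤ) (N:ℤ), |Dq N v j| ^ p with hSdef
  have hS0 : 0 ≤ S :=
    Finset.sum_nonneg fun j _ => Real.rpow_nonneg (abs_nonneg _) p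
  -- per-interval value for natural index k
  have hki : ∀ k : ℕ,
      IntervalIntegrable (fun x => |slopeFn N v x - midInterp N v x| ^ p) volume
        ((k:ℝ)*hh) (((k:ℝ)+1)*hh) ∧
      ∫ x in ((k:ℝ)*hh)..(((k:ℝ)+1)*hh), |slopeFn N v x - midInterp N v x| ^ p =
        (|Dq N v (k:ℤ)| ^ p + |Dq N v ((k:ℤ)+1)| ^ p) * c := by
    intro k
    have h := interval_eval' p hp0 N hN v ((k:ℤ)+1)
    have e1 : (((k:ℤ)+1 : ℤ):ℝ) - 1 = (k:ℝ) := by push_cast; ring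
    have e2 : (((k:ℤ)+1 : ℤ):ℝ) = (k:ℝ)+1 := by push_cast; ring
    have e3 : (k:ℤ)+1-1 = (k:ℤ) := by ring
    rw [e1, e2, e3] at h
    exact h
  -- integral over (0,1) equals the sum
  have hT : (∫ x in Set.Ioo (0:ℝ) 1, |slopeFn N v x - midInterp N v x| ^ p) = 2*S*c := by
    have hadj := intervalIntegral.sum_integral_adjacent_intervals (μ := volume)
      (f := fun x => |slopeFn N v x - midInterp N v x| ^ p)
      (a := fun k : ℕ => (k:ℝ)*hh) (n := N) ?_
    · have hsum : ∑ k ∈ Finset.range N,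
          (∫ x in ((k:ℝ)*hh)..(((k:ℝ)+1)*hh), |slopeFn N v x - midInterp N v x| ^ p) =
          ∑ k ∈ Finset.range N,
            ((|Dq N v (k:ℤ)| ^ p + |Dq N v ((k:ℤ)+1)| ^ p) * c) :=
        Finset.sum_congr rfl fun k _ => (hki k).2
      have hcast : ∀ k : ℕ, ((k+1 : ℕ):ℝ)*hh = ((k:ℝ)+1)*hh := by
        intro k; push_cast; ring
      simp only [hcast, Nat.cast_zero, zero_mul] at hadj
      have h1 : (N:ℝ)*hh = 1 := by
        rw [hhdef]; field_simp
      rw [h1] at hadj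
      have hIoo : (∫ x in Set.Ioo (0:ℝ) 1, |slopeFn N v x - midInterp N v x| ^ p) =
          ∫ x in (0:ℝ)..1, |slopeFn N v x - midInterp N v x| ^ p := by
        rw [intervalIntegral.integral_of_le zero_le_one, integral_Ioc_eq_integral_Ioo]
      rw [hIoo, ← hadj, hsum]
      -- now evaluate the sum
      have hs1 : ∑ k ∈ Finset.range N, |Dq N v ((k:ℤ)+1)| ^ p = S :=
        sum_shift' N (fun j => |Dq N v j| ^ p)
      have hs2 : ∑ k ∈ Finset.range N, |Dq N v (k:ℤ)| ^ p = S := by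
        rw [← hs1]
        have hrot := sum_rot' N hN (fun k : ℕ => |Dq N v (k:ℤ)| ^ p) ?_
        · rw [hrot]
          apply Finset.sum_congr rfl
          intro k _
          push_cast
          ring_nf
        · simp only [Nat.cast_zero]
          have := Dq_per' N v hper 0
          rw [zero_add] at this
          rw [this]
      rw [← Finset.sum_mul, Finset.sum_add_distrib, hs1, hs2]
      ring
    · intro k _
      have := (hki k).1
      have hcast : ((k+1 : ℕ):ℝ)*hh = ((k:ℝ)+1)*hh := by push_cast; ring
      simpa [hcast] using this
  rw [hT]
  have hgoalsum : ∑ j ∈ Finset.Icc (1:ℤ) (N:ℤ), |Dq N v j| ^ p * hh = S * hh :=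
    (Finset.sum_mul _ _ _).symm
  rw [hgoalsum]
  -- pure algebra from here
  have hp1 : (0:ℝ) < 1 + p := by linarith
  set R : ℝ := (1+p)^(-(1/p)) * hh * (S*hh)^(1/p) with hRdef
  have hR0 : 0 ≤ R := by
    apply mul_nonneg (mul_nonneg (Real.rpow_nonneg hp1.le _) hhpos.le)
    exact Real.rpow_nonneg (by positivity) _
  have hRp : R^p = (1+p)⁻¹ * hh^p * (S*hh) := by
    rw [hRdef, Real.mul_rpow (by positivity) (Real.rpow_nonneg (by positivity) _),
        Real.mul_rpow (Real.rpow_nonneg hp1.le _) hhpos.le,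
        ← Real.rpow_mul hp1.le, ← Real.rpow_mul (by positivity : (0:ℝ) ≤ S*hh)]
    have e1 : -(1/p)*p = -1 := by field_simp
    have e2 : 1/p*p = 1 := by field_simp
    rw [e1, e2, Real.rpow_one, Real.rpow_neg_one]
  have hle : 2*S*c ≤ R^p := by
    rw [hRp]
    have h2le : (2:ℝ) ≤ 2^(p+1) := by
      calc (2:ℝ) = 2^(1:ℝ) := (Real.rpow_one 2).symm
        _ ≤ 2^(p+1) := Real.rpow_le_rpow_of_exponent_le (by norm_num) (by linarith)
    have h2p : (hh/2)^(p+1) ≤ hh^(p+1)/2 := by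
      rw [Real.div_rpow hhpos.le (by norm_num : (0:ℝ) ≤ 2)]
      apply div_le_div_of_nonneg_left (Real.rpow_nonneg hhpos.le _) (by norm_num) h2le
    have ehh : hh^(p+1) = hh^p * hh := by
      rw [Real.rpow_add hhpos, Real.rpow_one]
    have key : 2 * (hh/2)^(p+1) ≤ hh^p * hh := by
      rw [← ehh]; linarith
    calc 2*S*c = S * (2*(hh/2)^(p+1)) / (p+1) := by rw [hcdef]; ring
      _ ≤ S * (hh^p * hh) / (p+1) := by
          apply div_le_div_of_nonneg_right ?_ (by linarith)
          exact mul_le_mul_of_nonneg_left key hS0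
      _ = (1+p)⁻¹ * hh^p * (S*hh) := by
          rw [inv_eq_one_div]
          field_simp
          ring
  calc (2*S*c) ^ (1/p) ≤ (R^p) ^ (1/p) := by
        apply Real.rpow_le_rpow (by positivity) hle (by positivity)
    _ = R := by
        rw [← Real.rpow_mul hR0, mul_one_div, div_self hp0.ne', Real.rpow_one]

end
end
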